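/- Let a and b be complex polynomials such that a(z) ≠ 0 for every z in the closed unit disc, and let W(z) = b(z)/a(z). Denote by ā and b̄ the polynomials obtained by conjugating each coefficient. Then ā(A) is invertible and (1/2π) ∫₀^{2π} conj(W(e^{iθ})) (I − e^{iθ}A)⁻¹ B dθ = b̄(A) · ā(A)⁻¹ · B. -/

import Mathlib

open Matrix Polynomial Metric Complex Finset Filter MeasureTheory intervalIntegral
open scoped ENNReal NNReal Topology

noncomputable section

attribute [local instance] Matrix.linftyOpNormedAddCommGroup Matrix.linftyOpNormedRing
  Matrix.linftyOpNormedAlgebra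

namespace Markov18


lemma eval_map_conj (p : ℂ[X]) (z : ℂ) :
    (p.map (starRingEnd ℂ)).eval z = (starRingEnd ℂ) (p.eval ((starRingEnd ℂ) z)) := by
  rw [Polynomial.eval_map]
  rw [show p.eval ((starRingEnd ℂ) z) = Polynomial.eval₂ (RingHom.id ℂ) ((starRingEnd ℂ) z) p from rfl]
  rw [Polynomial.hom_eval₂]
  simp

lemma exists_rho (a' : ℂ[X]) (ha' : ∀ z ∈ closedBall (0:ℂ) 1, a'.eval z ≠ 0) :
    ∃ ρ : ℝ, 1 < ρ ∧ ∀ z : ℂ, ‖z‖ ≤ ρ → a'.eval z ≠ 0 := by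
  have ha0 : a' ≠ 0 := fun h => ha' 0 (by simp) (by simp [h])
  have hroot : ∀ z : ℂ, a'.eval z = 0 → 1 < ‖z‖ := by
    intro z hz
    by_contra h
    exact ha' z (by simpa [Metric.mem_closedBall] using not_lt.mp h) hz
  classical
  set T : Finset ℝ := (a'.roots.map (fun z => ‖z‖)).toFinset with hT
  by_cases hTne : T.Nonempty
  · refine ⟨(1 + T.min' hTne) / 2, ?_, ?_⟩
    · have : 1 < T.min' hTne := by
        obtain ⟨z, hz, hz2⟩ := Multiset.mem_map.mp (Multiset.mem_toFinset.mp (T.min'_mem hTne))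
        rw [← hz2]
        exact hroot z ((Polynomial.mem_roots ha0).mp hz)
      linarith
    · intro z hz hzero
      have hmem : ‖z‖ ∈ T := by
        rw [hT, Multiset.mem_toFinset, Multiset.mem_map]
        exact ⟨z, (Polynomial.mem_roots ha0).mpr hzero, rfl⟩
      have h1 := T.min'_le _ hmem
      have h2 := hroot z hzero
      -- ‖z‖ ≤ (1 + min)/2 < min ≤ ‖z‖ contradiction
      have : T.min' hTne ≤ (1 + T.min' hTne)/2 := le_trans h1 hz
      have h3 : 1 < T.min' hTne := by
        obtain ⟨w, hw, hw2⟩ := Multiset.mem_map.mp (Multiset.mem_toFinset.mp (T.min'_mem hTne))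
        rw [← hw2]; exact hroot w ((Polynomial.mem_roots ha0).mp hw)
      linarith
  · refine ⟨2, one_lt_two, fun z _ hzero => ?_⟩
    exact hTne ⟨‖z‖, by
      rw [hT, Multiset.mem_toFinset, Multiset.mem_map]
      exact ⟨z, (Polynomial.mem_roots ha0).mpr hzero, rfl⟩⟩



lemma poly_hasSum (p : ℂ[X]) (z : ℂ) :
    HasSum (fun k => p.coeff k * z ^ k) (p.eval z) := by
  have h0 : ∀ k ∉ Finset.range (p.natDegree + 1), p.coeff k * z ^ k = 0 := by
    intro k hk
    rw [Polynomial.coeff_eq_zero_of_natDegree_lt (by simpa using hk), zero_mul]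
  have := hasSum_sum_of_ne_finset_zero (L := SummationFilter.unconditional ℕ) h0
  rwa [← Polynomial.eval_eq_sum_range] at this

lemma poly_summable_norm (p : ℂ[X]) (z : ℂ) :
    Summable (fun k => ‖p.coeff k * z ^ k‖) := by
  apply summable_of_ne_finset_zero (s := Finset.range (p.natDegree + 1))
  intro k hk
  rw [Polynomial.coeff_eq_zero_of_natDegree_lt (by simpa using hk), zero_mul, norm_zero]

set_option maxHeartbeats 1000000 in
lemma exists_coeffs (a' x : ℂ[X]) (ha' : ∀ z ∈ closedBall (0:ℂ) 1, a'.eval z ≠ 0)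
    (hrho : ∃ ρ : ℝ, 1 < ρ ∧ ∀ z : ℂ, ‖z‖ ≤ ρ → a'.eval z ≠ 0) :
    ∃ c : ℕ → ℂ, (Summable fun k => ‖c k‖) ∧
      (∀ z : ℂ, ‖z‖ ≤ 1 → HasSum (fun k => c k * z ^ k) (x.eval z / a'.eval z)) ∧
      (∀ N, ∑ kl ∈ Finset.HasAntidiagonal.antidiagonal N, a'.coeff kl.1 * c kl.2 = x.coeff N) := by
  obtain ⟨ρ, hρ1, hρ⟩ := hrho
  set R : NNReal := ⟨ρ, by linarith⟩ with hRdef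
  set f : ℂ → ℂ := fun z => x.eval z / a'.eval z with hfdef
  have hdiff : DifferentiableOn ℂ f (closedBall 0 R) := by
    apply DifferentiableOn.div
    · exact (Polynomial.differentiable x).differentiableOn
    · exact (Polynomial.differentiable a').differentiableOn
    · intro z hz
      exact hρ z (by have := (by simpa [Metric.mem_closedBall, Complex.dist_eq] using hz : ‖z‖ ≤ (R:ℝ)); exact this)
  have hR : (0 : NNReal) < R := by
    rw [← NNReal.coe_lt_coe]; show (0:ℝ) < ρ; linarith
  have H := hdiff.hasFPowerSeriesOnBall hR
  set p := cauchyPowerSeries f 0 R with hpdef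
  set c : ℕ → ℂ := fun k => p.coeff k with hcdef
  -- summability
  set r : NNReal := ⟨(1+ρ)/2, by linarith⟩ with hrdef
  have hrρ : (r : ℝ≥0∞) < p.radius := by
    refine lt_of_lt_of_le ?_ H.r_le
    rw [ENNReal.coe_lt_coe, ← NNReal.coe_lt_coe]
    show (1+ρ)/2 < ρ; linarith
  obtain ⟨C, hC0, hC⟩ := p.norm_mul_pow_le_of_lt_radius hrρ
  have hr1 : (1:ℝ) < (r:ℝ) := by show (1:ℝ) < (1+ρ)/2; linarith
  have hr0 : (0:ℝ) < (r:ℝ) := lt_trans one_pos hr1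
  have hcsum : Summable fun k => ‖c k‖ := by
    refine Summable.of_nonneg_of_le (fun k => norm_nonneg _)
      (f := fun k => C * ((r:ℝ)⁻¹) ^ k) (fun k => ?_) ?_
    · have h1 := hC k
      rw [FormalMultilinearSeries.norm_apply_eq_norm_coef] at h1
      have h2 : ‖c k‖ ≤ C / (r:ℝ)^k := (le_div_iff₀ (pow_pos hr0 k)).mpr h1
      rw [div_eq_mul_inv, ← inv_pow] at h2
      exact h2
    · refine Summable.mul_left C (summable_geometric_of_lt_one (by positivity) ?_)
      rw [inv_lt_one_iff₀]; right; exact hr1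
  have hsum : ∀ z : ℂ, ‖z‖ ≤ 1 → HasSum (fun k => c k * z ^ k) (f z) := by
    intro z hz
    have hmem : z ∈ Metric.eball (0:ℂ) R := by
      rw [Metric.mem_eball, edist_zero_right]
      have h2 : ‖z‖₊ < R := by
        rw [← NNReal.coe_lt_coe, coe_nnnorm]
        exact lt_of_le_of_lt hz hρ1
      exact_mod_cast h2
    have := H.hasSum hmem
    simp only [zero_add] at this
    convert this using 2 with k
    · rfl
    rw [FormalMultilinearSeries.apply_eq_pow_smul_coeff, smul_eq_mul, mul_comm]
  refine ⟨c, hcsum, fun z hz => hsum z hz, ?_⟩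
  set e : ℕ → ℂ := fun N => ∑ kl ∈ Finset.HasAntidiagonal.antidiagonal N, a'.coeff kl.1 * c kl.2 with hedef
  have key : ∀ z : ℂ, ‖z‖ ≤ 1 → HasSum (fun N => z ^ N • e N) (x.eval z) := by
    intro z hz
    have hA : Summable fun k => ‖a'.coeff k * z ^ k‖ := poly_summable_norm a' z
    have hB : Summable fun k => ‖c k * z ^ k‖ := by
      refine Summable.of_nonneg_of_le (fun k => norm_nonneg _) (fun k => ?_) hcsum
      rw [norm_mul, norm_pow]
      calc ‖c k‖ * ‖z‖ ^ k ≤ ‖c k‖ * 1 :=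
            mul_le_mul_of_nonneg_left (pow_le_one₀ (norm_nonneg z) hz) (norm_nonneg _)
        _ = ‖c k‖ := mul_one _
    have hprod := tsum_mul_tsum_eq_tsum_sum_antidiagonal_of_summable_norm hA hB
    have h1 : (∑' k, a'.coeff k * z ^ k) = a'.eval z := (poly_hasSum a' z).tsum_eq
    have h2 : (∑' k, c k * z ^ k) = f z := (hsum z hz).tsum_eq
    have hsummable := (summable_norm_sum_mul_antidiagonal_of_summable_norm hA hB).of_norm
    have hval : a'.eval z * f z = x.eval z := by
      rw [hfdef]
      field_simp [hρ z (le_trans hz (le_of_lt hρ1))]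
    have hmain : HasSum (fun N => ∑ kl ∈ Finset.HasAntidiagonal.antidiagonal N,
        (a'.coeff kl.1 * z ^ kl.1) * (c kl.2 * z ^ kl.2)) (x.eval z) := by
      have h3 := hsummable.hasSum
      rwa [← hprod, h1, h2, hval] at h3
    convert hmain using 2 with N
    rw [hedef, smul_eq_mul, Finset.mul_sum]
    refine Finset.sum_congr rfl (fun kl hkl => ?_)
    have hN : kl.1 + kl.2 = N := Finset.HasAntidiagonal.mem_antidiagonal.mp hkl
    rw [← hN]; ring
  have hcoeff1 : ∀ (u : ℕ → ℂ) (n : ℕ),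
      (FormalMultilinearSeries.ofScalars ℂ u).coeff n = u n := by
    intro u n
    simp [FormalMultilinearSeries.ofScalars, FormalMultilinearSeries.coeff, List.ofFn_const]
    rw [show (1 : Fin n → ℂ) = fun _ => (1:ℂ) from rfl, List.ofFn_const, List.prod_replicate,
      one_pow, mul_one]
  have H1 : HasFPowerSeriesAt (fun z => x.eval z) (FormalMultilinearSeries.ofScalars ℂ e) 0 := by
    rw [hasFPowerSeriesAt_iff]
    filter_upwards [Metric.ball_mem_nhds (0:ℂ) one_pos] with z hz
    simp only [hcoeff1, zero_add]
    exact key z (le_of_lt (mem_ball_zero_iff.mp hz))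
  have H2 : HasFPowerSeriesAt (fun z => x.eval z)
      (FormalMultilinearSeries.ofScalars ℂ (fun n => x.coeff n)) 0 := by
    rw [hasFPowerSeriesAt_iff]
    filter_upwards [Metric.ball_mem_nhds (0:ℂ) one_pos] with z hz
    simp only [hcoeff1, zero_add]
    have := poly_hasSum x z
    convert this using 2 with k
    · rfl
    rw [smul_eq_mul, mul_comm]
  have hEq := H1.eq_formalMultilinearSeries H2
  intro N
  have h4 := congrArg (fun q : FormalMultilinearSeries ℂ ℂ ℂ => q.coeff N) hEq
  simpa only [hcoeff1] using h4



attribute [local instance] Matrix.linftyOpNormedAddCommGroup Matrix.linftyOpNormedRing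
  Matrix.linftyOpNormedAlgebra

variable {n : ℕ}

lemma pow_bound (hn : 1 ≤ n) (A : Matrix (Fin n) (Fin n) ℂ)
    (hA : ∀ μ ∈ spectrum ℂ A, ‖μ‖ < 1) :
    ∃ C r : ℝ, 0 < C ∧ 0 < r ∧ r < 1 ∧ ∀ k, ‖A ^ k‖ ≤ C * r ^ k := by
  haveI : Nonempty (Fin n) := ⟨⟨0, hn⟩⟩
  haveI : CompleteSpace (Matrix (Fin n) (Fin n) ℂ) := FiniteDimensional.complete ℂ _
  have hsr : spectralRadius ℂ A < 1 := by
    have := spectrum.spectralRadius_lt_of_forall_lt A (r := 1)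
      (fun z hz => by
        rw [← NNReal.coe_lt_coe, coe_nnnorm]
        exact hA z hz)
    simpa using this
  obtain ⟨r', hr'1, hr'2⟩ := exists_between hsr
  have hr'top : r' ≠ ⊤ := ne_top_of_lt (lt_of_lt_of_le hr'2 le_top)
  have hr'pos : 0 < r' := lt_of_le_of_lt zero_le hr'1
  set rr : ℝ := r'.toReal with hrr
  have hrrpos : 0 < rr := ENNReal.toReal_pos (ne_of_gt hr'pos) hr'top
  have hrr1 : rr < 1 := by
    rw [hrr, ← ENNReal.toReal_one]
    exact ENNReal.toReal_strict_mono (by simp) hr'2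
  have htend := spectrum.pow_nnnorm_pow_one_div_tendsto_nhds_spectralRadius A
  have hev : ∀ᶠ k : ℕ in atTop, (‖A ^ k‖₊ : ℝ≥0∞) ^ (1 / (k:ℝ)) < r' :=
    htend.eventually_lt_const hr'1
  obtain ⟨K, hK⟩ := eventually_atTop.mp (hev.and (eventually_ge_atTop 1))
  have hbound : ∀ k ≥ K, ‖A ^ k‖ ≤ rr ^ k := by
    intro k hk
    obtain ⟨h1, h2⟩ := hK k hk
    have hkne : (k:ℝ) ≠ 0 := Nat.cast_ne_zero.mpr (by omega)
    have h3 : ((‖A ^ k‖₊ : ℝ≥0∞) ^ (1 / (k:ℝ))) ^ (k:ℝ) < r' ^ (k:ℝ) :=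
      ENNReal.rpow_lt_rpow h1 (by positivity)
    rw [← ENNReal.rpow_mul, one_div, inv_mul_cancel₀ hkne, ENNReal.rpow_one] at h3
    have h4 : (‖A ^ k‖₊ : ℝ≥0∞) < r' ^ k := by
      rwa [← ENNReal.rpow_natCast r' k]
    have h5 := ENNReal.toReal_strict_mono (by simp [hr'top]) h4
    rw [ENNReal.coe_toReal, coe_nnnorm, ENNReal.toReal_pow] at h5
    exact le_of_lt h5
  have hS : (0:ℝ) ≤ ∑ j ∈ Finset.range K, ‖A ^ j‖ / rr ^ j :=
    Finset.sum_nonneg (fun j _ => by positivity)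
  refine ⟨1 + ∑ j ∈ Finset.range K, ‖A ^ j‖ / rr ^ j, rr, by linarith, hrrpos, hrr1, fun k => ?_⟩
  rcases lt_or_ge k K with h | h
  · have h1 : ‖A ^ k‖ / rr ^ k ≤ ∑ j ∈ Finset.range K, ‖A ^ j‖ / rr ^ j :=
      Finset.single_le_sum (f := fun j => ‖A ^ j‖ / rr ^ j) (fun j _ => by positivity)
        (Finset.mem_range.mpr h)
    have h2 : ‖A ^ k‖ / rr ^ k ≤ 1 + ∑ j ∈ Finset.range K, ‖A ^ j‖ / rr ^ j := by linarith
    calc ‖A ^ k‖ = (‖A ^ k‖ / rr ^ k) * rr ^ k := by field_simp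
      _ ≤ (1 + ∑ j ∈ Finset.range K, ‖A ^ j‖ / rr ^ j) * rr ^ k :=
          mul_le_mul_of_nonneg_right h2 (by positivity)
  · calc ‖A ^ k‖ ≤ rr ^ k := hbound k h
      _ = 1 * rr ^ k := (one_mul _).symm
      _ ≤ (1 + ∑ j ∈ Finset.range K, ‖A ^ j‖ / rr ^ j) * rr ^ k :=
          mul_le_mul_of_nonneg_right (by linarith) (by positivity)



attribute [local instance] Matrix.linftyOpNormedAddCommGroup Matrix.linftyOpNormedRing
  Matrix.linftyOpNormedAlgebra

variable {n : ℕ}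

lemma summable_smul_pow (A : Matrix (Fin n) (Fin n) ℂ)
    {C r : ℝ} (hr0 : 0 < r) (hr1 : r < 1) (hpow : ∀ k, ‖A ^ k‖ ≤ C * r ^ k)
    {c : ℕ → ℂ} {D : ℝ} (hc : ∀ k, ‖c k‖ ≤ D) :
    Summable (fun k => ‖c k • A ^ k‖) := by
  have hC0 : 0 ≤ C := by
    have h1 := le_trans (norm_nonneg (A ^ 0)) (hpow 0)
    simpa using h1
  refine Summable.of_nonneg_of_le (fun k => norm_nonneg _)
    (f := fun k => (D * C) * r ^ k) (fun k => ?_) ?_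
  · rw [norm_smul]
    have h0 : 0 ≤ ‖c k‖ := norm_nonneg _
    have h2 : ‖A ^ k‖ ≤ C * r ^ k := hpow k
    have h3 : 0 ≤ C * r ^ k := by positivity
    calc ‖c k‖ * ‖A ^ k‖ ≤ D * (C * r ^ k) :=
          mul_le_mul (hc k) h2 (norm_nonneg _) (le_trans h0 (hc k))
      _ = (D * C) * r ^ k := by ring
  · exact (summable_geometric_of_lt_one (le_of_lt hr0) hr1).mul_left _

lemma geom_inverse (A : Matrix (Fin n) (Fin n) ℂ)
    {C r : ℝ} (hr0 : 0 < r) (hr1 : r < 1) (hpow : ∀ k, ‖A ^ k‖ ≤ C * r ^ k)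
    (z : ℂ) (hz : ‖z‖ ≤ 1) :
    HasSum (fun k => z ^ k • A ^ k) ((1 - z • A)⁻¹) ∧ IsUnit (1 - z • A) := by
  haveI : CompleteSpace (Matrix (Fin n) (Fin n) ℂ) := FiniteDimensional.complete ℂ _
  have hsn : Summable (fun k => ‖z ^ k • A ^ k‖) :=
    summable_smul_pow A hr0 hr1 hpow (D := 1)
      (fun k => by rw [norm_pow]; exact pow_le_one₀ (norm_nonneg z) hz)
  have hs : Summable (fun k => z ^ k • A ^ k) := hsn.of_norm
  have hxk : ∀ k, z ^ k • A ^ k = (z • A) ^ k := fun k => (smul_pow z A k).symm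
  have hs' : Summable (fun k => (z • A) ^ k) := by
    refine hs.congr (fun k => hxk k)
  set S : Matrix (Fin n) (Fin n) ℂ := ∑' k, (z • A) ^ k with hS
  have hzero_add : S = 1 + ∑' k, (z • A) ^ (k + 1) := by
    rw [hS, hs'.tsum_eq_zero_add]
    simp
  have hmulL : (z • A) * S = ∑' k, (z • A) ^ (k + 1) := by
    rw [hS, ← hs'.tsum_mul_left (z • A)]
    exact tsum_congr (fun k => (pow_succ' _ _).symm)
  have hmulR : S * (z • A) = ∑' k, (z • A) ^ (k + 1) := by
    rw [hS, ← hs'.tsum_mul_right (z • A)]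
    exact tsum_congr (fun k => (pow_succ _ _).symm)
  have hL : (1 - z • A) * S = 1 := by
    rw [sub_mul, one_mul, hmulL, hzero_add]
    abel
  have hR : S * (1 - z • A) = 1 := by
    rw [mul_sub, mul_one, hmulR, hzero_add]
    abel
  have hunit : IsUnit (1 - z • A) := ⟨⟨1 - z • A, S, hL, hR⟩, rfl⟩
  have hinv : (1 - z • A)⁻¹ = S := Matrix.inv_eq_right_inv hL
  refine ⟨?_, hunit⟩
  rw [hinv]
  have h5 := hs.hasSum
  rwa [show (∑' k, z ^ k • A ^ k) = S from by rw [hS]; exact tsum_congr hxk] at h5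

lemma entry_hasSum {ι : Type} (g : ι → Matrix (Fin n) (Fin n) ℂ) (M : Matrix (Fin n) (Fin n) ℂ)
    (h : HasSum g M) (B : Matrix (Fin n) (Fin 1) ℂ) (i : Fin n) (j : Fin 1) :
    HasSum (fun k => (g k * B) i j) ((M * B) i j) := by
  let φ : Matrix (Fin n) (Fin n) ℂ →ₗ[ℂ] ℂ :=
    { toFun := fun M => (M * B) i j
      map_add' := fun M N => by simp [Matrix.add_mul]
      map_smul' := fun c M => by simp [Matrix.smul_mul] }
  have hφ : Continuous φ := LinearMap.continuous_of_finiteDimensional φ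
  exact h.map (φ.toAddMonoidHom) hφ

lemma int_exp (m : ℤ) :
    (∫ θ in (0:ℝ)..(2 * Real.pi), Complex.exp ((m * Complex.I) * θ)) =
      if m = 0 then ((2 * Real.pi : ℝ) : ℂ) else 0 := by
  rcases eq_or_ne m 0 with hm | hm
  · simp [hm]
  · rw [if_neg hm]
    have hc : (m : ℂ) * Complex.I ≠ 0 := by
      simp [Complex.I_ne_zero, Complex.ext_iff, hm]
    have hderiv : ∀ θ : ℝ, HasDerivAt (fun θ : ℝ => Complex.exp ((m * Complex.I) * θ) / (m * Complex.I))
        (Complex.exp ((m * Complex.I) * θ)) θ := by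
      intro θ
      have h1 : HasDerivAt (fun θ : ℝ => (θ : ℂ)) 1 θ := Complex.ofRealCLM.hasDerivAt
      have h2 : HasDerivAt (fun θ : ℝ => (m * Complex.I) * θ) (m * Complex.I) θ := by
        simpa using h1.const_mul ((m : ℂ) * Complex.I)
      have h3 := h2.cexp
      have h4 := h3.div_const ((m : ℂ) * Complex.I)
      have h6 : ((m:ℂ) * Complex.I) * Complex.exp ((m * Complex.I) * θ) / (m * Complex.I) =
          Complex.exp ((m * Complex.I) * θ) := by
        field_simp
      rw [show Complex.exp ((m:ℂ) * Complex.I * ↑θ) = ((m:ℂ) * Complex.I) *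
        Complex.exp ((m * Complex.I) * θ) / (m * Complex.I) from h6.symm]
      convert h4 using 2 with x
      · rfl
      ring
    have hint : ∫ θ in (0:ℝ)..(2 * Real.pi), Complex.exp ((m * Complex.I) * θ) =
        Complex.exp ((m * Complex.I) * ((2 * Real.pi : ℝ) : ℂ)) / (m * Complex.I) -
          Complex.exp ((m * Complex.I) * ((0:ℝ) : ℂ)) / (m * Complex.I) := by
      refine intervalIntegral.integral_eq_sub_of_hasDerivAt (fun θ _ => hderiv θ) ?_
      apply Continuous.intervalIntegrable
      exact Complex.continuous_exp.comp (by continuity)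
    rw [hint]
    have h5 : Complex.exp ((m * Complex.I) * ((2 * Real.pi : ℝ) : ℂ)) = 1 := by
      rw [show ((m : ℂ) * Complex.I) * (((2 * Real.pi : ℝ)) : ℂ) = m * (2 * Real.pi * Complex.I) by
        push_cast; ring]
      exact Complex.exp_int_mul_two_pi_mul_I m
    rw [h5]
    simp

lemma integral_tsum_swap {ι : Type} [Countable ι] (F : ι → ℝ → ℂ)
    (hcont : ∀ p, Continuous (F p)) (bound : ι → ℝ)
    (hbd : ∀ p θ, ‖F p θ‖ ≤ bound p) (hsum : Summable bound) :
    ∫ θ in (0:ℝ)..(2 * Real.pi), (∑' p, F p θ) =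
      ∑' p, ∫ θ in (0:ℝ)..(2 * Real.pi), F p θ := by
  have h2π : (0:ℝ) ≤ 2 * Real.pi := by positivity
  have hbd0 : ∀ p, 0 ≤ bound p := fun p => le_trans (norm_nonneg _) (hbd p 0)
  simp only [intervalIntegral.integral_of_le h2π]
  rw [← MeasureTheory.integral_tsum]
  · intro p
    exact ((hcont p).aestronglyMeasurable).restrict
  · have hle : ∀ p, ∫⁻ θ in Set.Ioc (0:ℝ) (2 * Real.pi), ‖F p θ‖₊ ∂MeasureTheory.volume ≤
        ENNReal.ofReal (bound p) * ENNReal.ofReal (2 * Real.pi) := by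
      intro p
      calc ∫⁻ θ in Set.Ioc (0:ℝ) (2 * Real.pi), (‖F p θ‖₊ : ℝ≥0∞) ∂MeasureTheory.volume
          ≤ ∫⁻ _ in Set.Ioc (0:ℝ) (2 * Real.pi), ENNReal.ofReal (bound p) ∂MeasureTheory.volume := by
            refine MeasureTheory.lintegral_mono (fun θ => ?_)
            rw [← enorm_eq_nnnorm, ← ofReal_norm]
            exact ENNReal.ofReal_le_ofReal (hbd p θ)
        _ = ENNReal.ofReal (bound p) * ENNReal.ofReal (2 * Real.pi) := by
            rw [MeasureTheory.lintegral_const, MeasureTheory.Measure.restrict_apply_univ,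
              Real.volume_Ioc]
            simp
    refine ne_top_of_le_ne_top ?_ (ENNReal.tsum_le_tsum hle)
    rw [ENNReal.tsum_mul_right]
    refine ENNReal.mul_ne_top ?_ ENNReal.ofReal_ne_top
    have : Summable (fun p => (bound p).toNNReal) := by
      have := hsum.toNNReal
      exact this
    rw [show (fun p => ENNReal.ofReal (bound p)) = fun p => ((bound p).toNNReal : ℝ≥0∞) from rfl]
    exact ENNReal.tsum_coe_ne_top_iff_summable.mpr this


lemma entry_le_norm {m' : ℕ} (M : Matrix (Fin n) (Fin m') ℂ) (i : Fin n) (j : Fin m') :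
    ‖M i j‖ ≤ ‖M‖ := by
  have h1 : ‖M i j‖₊ ≤ ∑ j', ‖M i j'‖₊ :=
    Finset.single_le_sum (f := fun j' => ‖M i j'‖₊) (fun _ _ => zero_le) (Finset.mem_univ j)
  have h2 : (∑ j', ‖M i j'‖₊) ≤ Finset.univ.sup fun i => ∑ j', ‖M i j'‖₊ :=
    Finset.le_sup (f := fun i => ∑ j', ‖M i j'‖₊) (Finset.mem_univ i)
  have h3 := le_trans h1 h2
  rw [Matrix.linfty_opNorm_def]
  exact_mod_cast h3

lemma norm_mul_le' {m' : ℕ} (M : Matrix (Fin n) (Fin n) ℂ) (B : Matrix (Fin n) (Fin m') ℂ) :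
    ‖M * B‖ ≤ ‖M‖ * ‖B‖ := by
  have := Matrix.linfty_opNNNorm_mul M B
  exact_mod_cast this

lemma aeval_hasSum (q : ℂ[X]) (A : Matrix (Fin n) (Fin n) ℂ) :
    HasSum (fun k => q.coeff k • A ^ k) (Polynomial.aeval A q) := by
  have h0 : ∀ k ∉ Finset.range (q.natDegree + 1), q.coeff k • A ^ k = 0 := fun k hk => by
    rw [Polynomial.coeff_eq_zero_of_natDegree_lt (by simpa using hk), zero_smul]
  have h1 := hasSum_sum_of_ne_finset_zero (L := SummationFilter.unconditional ℕ) h0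
  rwa [← Polynomial.aeval_eq_sum_range] at h1

lemma aeval_summable_norm (q : ℂ[X]) (A : Matrix (Fin n) (Fin n) ℂ) :
    Summable (fun k => ‖q.coeff k • A ^ k‖) := by
  apply summable_of_ne_finset_zero (s := Finset.range (q.natDegree + 1))
  intro k hk
  rw [Polynomial.coeff_eq_zero_of_natDegree_lt (by simpa using hk), zero_smul, norm_zero]

lemma poly_mul_tsum (q x : ℂ[X]) (A : Matrix (Fin n) (Fin n) ℂ)
    {C r : ℝ} (hr0 : 0 < r) (hr1 : r < 1) (hpow : ∀ k, ‖A ^ k‖ ≤ C * r ^ k)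
    (c : ℕ → ℂ) (hcs : Summable fun k => ‖c k‖)
    (hid : ∀ N, ∑ kl ∈ Finset.HasAntidiagonal.antidiagonal N, q.coeff kl.1 * c kl.2 = x.coeff N) :
    (Polynomial.aeval A q) * (∑' k, c k • A ^ k) = Polynomial.aeval A x := by
  haveI : CompleteSpace (Matrix (Fin n) (Fin n) ℂ) := FiniteDimensional.complete ℂ _
  have hcb : ∀ k, ‖c k‖ ≤ ∑' j, ‖c j‖ := fun k => hcs.le_tsum k (fun j _ => norm_nonneg _)
  have hsn : Summable fun k => ‖c k • A ^ k‖ := summable_smul_pow A hr0 hr1 hpow hcb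
  have hqn : Summable fun k => ‖q.coeff k • A ^ k‖ := aeval_summable_norm q A
  have hprod := tsum_mul_tsum_eq_tsum_sum_antidiagonal_of_summable_norm hqn hsn
  erw [(aeval_hasSum q A).tsum_eq] at hprod
  erw [hprod]
  have hterm : ∀ N, (∑ kl ∈ Finset.HasAntidiagonal.antidiagonal N,
      (q.coeff kl.1 • A ^ kl.1) * (c kl.2 • A ^ kl.2)) = x.coeff N • A ^ N := by
    intro N
    rw [← hid N, Finset.sum_smul]
    refine Finset.sum_congr rfl (fun kl hkl => ?_)
    have hN := Finset.HasAntidiagonal.mem_antidiagonal.mp hkl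
    rw [smul_mul_assoc, mul_smul_comm, ← pow_add, hN, smul_smul]
  erw [tsum_congr hterm, (aeval_hasSum x A).tsum_eq]

lemma pow_comm_aeval (q : ℂ[X]) (A : Matrix (Fin n) (Fin n) ℂ) (k : ℕ) :
    A ^ k * Polynomial.aeval A q = Polynomial.aeval A q * A ^ k := by
  calc A ^ k * Polynomial.aeval A q = Polynomial.aeval A (X ^ k * q) := by
        rw [_root_.map_mul, Polynomial.aeval_X_pow]
    _ = Polynomial.aeval A (q * X ^ k) := by rw [mul_comm]
    _ = Polynomial.aeval A q * A ^ k := by rw [_root_.map_mul, Polynomial.aeval_X_pow]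

lemma tsum_comm_aeval (q : ℂ[X]) (A : Matrix (Fin n) (Fin n) ℂ)
    {C r : ℝ} (hr0 : 0 < r) (hr1 : r < 1) (hpow : ∀ k, ‖A ^ k‖ ≤ C * r ^ k)
    (c : ℕ → ℂ) (hcs : Summable fun k => ‖c k‖) :
    (∑' k, c k • A ^ k) * (Polynomial.aeval A q) =
      (Polynomial.aeval A q) * (∑' k, c k • A ^ k) := by
  haveI : CompleteSpace (Matrix (Fin n) (Fin n) ℂ) := FiniteDimensional.complete ℂ _
  have hcb : ∀ k, ‖c k‖ ≤ ∑' j, ‖c j‖ := fun k => hcs.le_tsum k (fun j _ => norm_nonneg _)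
  have hs : Summable fun k => c k • A ^ k := (summable_smul_pow A hr0 hr1 hpow hcb).of_norm
  rw [← hs.tsum_mul_right, ← hs.tsum_mul_left]
  refine tsum_congr (fun k => ?_)
  rw [smul_mul_assoc, mul_smul_comm, pow_comm_aeval]

end Markov18

set_option maxHeartbeats 2000000 in
/-- For polynomials `a, b` with `a` nonvanishing on the closed unit disc and
`W = b/a`, the matrix `ā(A)` is invertible and
`(1/2π) ∫₀^{2π} conj(W(e^{iθ})) (I − e^{iθ}A)⁻¹ B dθ = b̄(A) ā(A)⁻¹ B`,
where `p̄` denotes the polynomial with conjugated coefficients. -/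
theorem markov_parameter_of_rational_W
    {n : ℕ} (hn : 1 ≤ n)
    (A : Matrix (Fin n) (Fin n) ℂ) (B : Matrix (Fin n) (Fin 1) ℂ)
    (hA : ∀ μ ∈ spectrum ℂ A, ‖μ‖ < 1)
    (a b : Polynomial ℂ)
    (ha : ∀ z ∈ Metric.closedBall (0:ℂ) 1, a.eval z ≠ 0)
    (W : ℂ → ℂ)
    (hW : ∀ z ∈ Metric.closedBall (0:ℂ) 1, W z = b.eval z / a.eval z) :
    IsUnit (Polynomial.aeval A (a.map (starRingEnd ℂ))) ∧
      (Matrix.of fun i j =>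
        (1 / (2 * Real.pi) : ℂ) * ∫ θ in (0:ℝ)..(2 * Real.pi),
          (starRingEnd ℂ) (W (Complex.exp (θ * Complex.I))) *
            (((1 - Complex.exp (θ * Complex.I) • A)⁻¹ * B :
              Matrix (Fin n) (Fin 1) ℂ) i j)) =
      Polynomial.aeval A (b.map (starRingEnd ℂ)) *
        (Polynomial.aeval A (a.map (starRingEnd ℂ)))⁻¹ * B := by
  classical
  haveI : Nonempty (Fin n) := ⟨⟨0, hn⟩⟩
  haveI : CompleteSpace (Matrix (Fin n) (Fin n) ℂ) := FiniteDimensional.complete ℂ _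
  set abar : ℂ[X] := a.map (starRingEnd ℂ) with habar
  set bbar : ℂ[X] := b.map (starRingEnd ℂ) with hbbar
  have hanz : ∀ z ∈ Metric.closedBall (0:ℂ) 1, abar.eval z ≠ 0 := by
    intro z hz
    rw [habar, Markov18.eval_map_conj]
    simp only [ne_eq, _root_.map_eq_zero]
    apply ha
    simpa [Metric.mem_closedBall, Complex.dist_eq] using
      (by simpa [Metric.mem_closedBall, Complex.dist_eq] using hz : ‖z‖ ≤ 1)
  have hrho := Markov18.exists_rho abar hanz
  obtain ⟨c, hcsum, hcval, hcid⟩ := Markov18.exists_coeffs abar bbar hanz hrho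
  obtain ⟨d, hdsum, hdval, hdid⟩ := Markov18.exists_coeffs abar 1 hanz hrho
  obtain ⟨C, r, hC, hr0, hr1, hpow⟩ := Markov18.pow_bound hn A hA
  have hcbound : ∀ k, ‖c k‖ ≤ ∑' j, ‖c j‖ := fun k => hcsum.le_tsum k (fun j _ => norm_nonneg _)
  have hdbound : ∀ k, ‖d k‖ ≤ ∑' j, ‖d j‖ := fun k => hdsum.le_tsum k (fun j _ => norm_nonneg _)
  have hMb_sn : Summable (fun k => ‖c k • A ^ k‖) :=
    Markov18.summable_smul_pow A hr0 hr1 hpow hcbound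
  have hMa_sn : Summable (fun k => ‖d k • A ^ k‖) :=
    Markov18.summable_smul_pow A hr0 hr1 hpow hdbound
  set Mb : Matrix (Fin n) (Fin n) ℂ := ∑' k, c k • A ^ k with hMbdef
  set Ma : Matrix (Fin n) (Fin n) ℂ := ∑' k, d k • A ^ k with hMadef
  set Q : Matrix (Fin n) (Fin n) ℂ := Polynomial.aeval A abar with hQdef
  set P : Matrix (Fin n) (Fin n) ℂ := Polynomial.aeval A bbar with hPdef
  have hQMa : Q * Ma = 1 := by
    have := Markov18.poly_mul_tsum abar 1 A hr0 hr1 hpow d hdsum hdid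
    rwa [_root_.map_one] at this
  have hMaQ : Ma * Q = 1 := by
    rw [hMadef, hQdef, Markov18.tsum_comm_aeval abar A hr0 hr1 hpow d hdsum]
    exact hQMa
  have hQMb : Q * Mb = P :=
    Markov18.poly_mul_tsum abar bbar A hr0 hr1 hpow c hcsum hcid
  have hunit : IsUnit Q := ⟨⟨Q, Ma, hQMa, hMaQ⟩, rfl⟩
  have hQinv : Q⁻¹ = Ma := Matrix.inv_eq_right_inv hQMa
  refine ⟨hunit, ?_⟩
  have hPQinv : P * Q⁻¹ = Mb := by
    rw [hQinv]
    have h1 : Mb = Ma * P := by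
      calc Mb = (Ma * Q) * Mb := by rw [hMaQ, one_mul]
        _ = Ma * (Q * Mb) := by rw [mul_assoc]
        _ = Ma * P := by rw [hQMb]
    have h2 : Ma * P = P * Ma := by
      rw [hMadef, hPdef]
      exact Markov18.tsum_comm_aeval bbar A hr0 hr1 hpow d hdsum
    rw [← h2, ← h1]
  rw [hPQinv]
  -- now entrywise
  ext i j
  simp only [Matrix.of_apply]
  -- notation
  set T : ℕ → ℂ := fun k => (A ^ k * B) i j with hTdef
  have hTbound : ∀ k, ‖T k‖ ≤ (C * ‖B‖) * r ^ k := by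
    intro k
    calc ‖T k‖ ≤ ‖A ^ k * B‖ := Markov18.entry_le_norm _ i j
      _ ≤ ‖A ^ k‖ * ‖B‖ := Markov18.norm_mul_le' _ _
      _ ≤ (C * r ^ k) * ‖B‖ := mul_le_mul_of_nonneg_right (hpow k) (norm_nonneg _)
      _ = (C * ‖B‖) * r ^ k := by ring
  have hTsum : Summable (fun k => ‖T k‖) := by
    refine Summable.of_nonneg_of_le (fun k => norm_nonneg _) hTbound ?_
    exact (summable_geometric_of_lt_one (le_of_lt hr0) hr1).mul_left _
  -- the integrand as a double sum
  set F : ℕ × ℕ → ℝ → ℂ := fun p θ =>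
    (c p.1 * Complex.exp (-(θ:ℂ) * Complex.I) ^ p.1) *
      (Complex.exp ((θ:ℂ) * Complex.I) ^ p.2 * T p.2) with hFdef
  have hzabs : ∀ θ : ℝ, ‖Complex.exp ((θ:ℂ) * Complex.I)‖ = 1 := fun θ =>
    Complex.norm_exp_ofReal_mul_I θ
  have hzabs' : ∀ θ : ℝ, ‖Complex.exp (-(θ:ℂ) * Complex.I)‖ = 1 := by
    intro θ
    have := Complex.norm_exp_ofReal_mul_I (-θ)
    simpa using this
  have hpoint : ∀ θ : ℝ,
      (starRingEnd ℂ) (W (Complex.exp ((θ:ℂ) * Complex.I))) *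
        (((1 - Complex.exp ((θ:ℂ) * Complex.I) • A)⁻¹ * B) i j) = ∑' p : ℕ × ℕ, F p θ := by
    intro θ
    set z : ℂ := Complex.exp ((θ:ℂ) * Complex.I) with hzdef
    have hz1 : ‖z‖ ≤ 1 := le_of_eq (hzabs θ)
    have hzmem : z ∈ Metric.closedBall (0:ℂ) 1 := by
      simpa [Metric.mem_closedBall, Complex.dist_eq] using hz1
    have hconjz : (starRingEnd ℂ) z = Complex.exp (-(θ:ℂ) * Complex.I) := by
      rw [hzdef, ← Complex.exp_conj]
      congr 1
      simp [Complex.conj_I]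
    have hczn : ‖(starRingEnd ℂ) z‖ ≤ 1 := by rw [hconjz]; exact le_of_eq (hzabs' θ)
    -- hasSum for conj W
    have h1 : HasSum (fun m => c m * ((starRingEnd ℂ) z) ^ m)
        ((starRingEnd ℂ) (W z)) := by
      have := hcval ((starRingEnd ℂ) z) hczn
      have hWz : (starRingEnd ℂ) (W z) =
          bbar.eval ((starRingEnd ℂ) z) / abar.eval ((starRingEnd ℂ) z) := by
        rw [hW z hzmem, map_div₀, hbbar, habar, Markov18.eval_map_conj,
          Markov18.eval_map_conj]
        simp
      rwa [← hWz] at this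
    -- hasSum for resolvent entry
    have h2 : HasSum (fun k => z ^ k * T k) (((1 - z • A)⁻¹ * B) i j) := by
      have hg := (Markov18.geom_inverse A hr0 hr1 hpow z hz1).1
      have h2' := Markov18.entry_hasSum _ _ hg B i j
      simpa [Matrix.smul_mul, Matrix.smul_apply, smul_eq_mul, hTdef] using h2'
    have h1n : Summable (fun m => ‖c m * ((starRingEnd ℂ) z) ^ m‖) := by
      refine Summable.of_nonneg_of_le (fun m => norm_nonneg _) (fun m => ?_) hcsum
      rw [norm_mul, norm_pow]
      calc ‖c m‖ * ‖(starRingEnd ℂ) z‖ ^ m ≤ ‖c m‖ * 1 :=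
            mul_le_mul_of_nonneg_left (pow_le_one₀ (norm_nonneg _) hczn) (norm_nonneg _)
        _ = ‖c m‖ := mul_one _
    have h2n : Summable (fun k => ‖z ^ k * T k‖) := by
      refine Summable.of_nonneg_of_le (fun k => norm_nonneg _) (fun k => ?_) hTsum
      rw [norm_mul, norm_pow, hzabs θ, one_pow, one_mul]
    have hprod := tsum_mul_tsum_of_summable_norm h1n h2n
    rw [h1.tsum_eq, h2.tsum_eq] at hprod
    rw [hprod, hFdef]
    refine tsum_congr (fun p => ?_)
    rw [hconjz, hzdef]
  have hFcont : ∀ p : ℕ × ℕ, Continuous (F p) := by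
    intro p
    apply Continuous.mul
    · apply continuous_const.mul
      apply Continuous.pow
      exact Complex.continuous_exp.comp (by continuity)
    · apply Continuous.mul _ continuous_const
      apply Continuous.pow
      exact Complex.continuous_exp.comp (by continuity)
  set bound : ℕ × ℕ → ℝ := fun p => ‖c p.1‖ * ((C * ‖B‖) * r ^ p.2) with hbounddef
  have hFbd : ∀ (p : ℕ × ℕ) (θ : ℝ), ‖F p θ‖ ≤ bound p := by
    intro p θ
    rw [hFdef, hbounddef]
    simp only []
    rw [norm_mul, norm_mul, norm_mul, norm_pow, norm_pow, hzabs, hzabs']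
    simp only [one_pow, mul_one, one_mul]
    exact mul_le_mul_of_nonneg_left (hTbound p.2) (norm_nonneg _)
  have hboundsum : Summable bound :=
    Summable.mul_of_nonneg hcsum
      ((summable_geometric_of_lt_one (le_of_lt hr0) hr1).mul_left (C * ‖B‖))
      (fun _ => norm_nonneg _) (fun k => by positivity)
  have hswap := Markov18.integral_tsum_swap F hFcont bound hFbd hboundsum
  have hint_eq : (∫ θ in (0:ℝ)..(2 * Real.pi),
      (starRingEnd ℂ) (W (Complex.exp ((θ:ℝ) * Complex.I))) *
        (((1 - Complex.exp ((θ:ℝ) * Complex.I) • A)⁻¹ * B) i j)) =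
      ∑' p : ℕ × ℕ, ∫ θ in (0:ℝ)..(2 * Real.pi), F p θ := by
    rw [← hswap]
    refine intervalIntegral.integral_congr (fun θ _ => ?_)
    exact hpoint θ
  rw [hint_eq]
  have hGi : ∀ p : ℕ × ℕ, (∫ θ in (0:ℝ)..(2 * Real.pi), F p θ) =
      (c p.1 * T p.2) * (if ((p.2 : ℤ) - (p.1 : ℤ)) = 0 then ((2 * Real.pi : ℝ) : ℂ) else 0) := by
    intro p
    have e1 : ∀ θ : ℝ, Complex.exp (-(θ:ℂ) * Complex.I) ^ p.1 =
        Complex.exp ((p.1:ℂ) * (-(θ:ℂ) * Complex.I)) := fun θ => (Complex.exp_nat_mul _ _).symm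
    have e2 : ∀ θ : ℝ, Complex.exp ((θ:ℂ) * Complex.I) ^ p.2 =
        Complex.exp ((p.2:ℂ) * ((θ:ℂ) * Complex.I)) := fun θ => (Complex.exp_nat_mul _ _).symm
    have hFθ : ∀ θ : ℝ, F p θ = (c p.1 * T p.2) *
        Complex.exp (((((p.2 : ℤ) - (p.1 : ℤ) : ℤ) : ℂ) * Complex.I) * θ) := by
      intro θ
      rw [hFdef]
      simp only []
      rw [e1, e2]
      rw [show (c p.1 * Complex.exp ((p.1:ℂ) * (-(θ:ℂ) * Complex.I))) *
          (Complex.exp ((p.2:ℂ) * ((θ:ℂ) * Complex.I)) * T p.2) =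
          (c p.1 * T p.2) * (Complex.exp ((p.1:ℂ) * (-(θ:ℂ) * Complex.I)) *
            Complex.exp ((p.2:ℂ) * ((θ:ℂ) * Complex.I))) from by ring]
      rw [← Complex.exp_add]
      congr 1
      push_cast
      ring
    rw [intervalIntegral.integral_congr (fun θ _ => hFθ θ),
      intervalIntegral.integral_const_mul, Markov18.int_exp]
  rw [tsum_congr hGi]
  have hGsum : Summable (fun p : ℕ × ℕ => (c p.1 * T p.2) *
      (if ((p.2:ℤ) - (p.1:ℤ)) = 0 then ((2 * Real.pi : ℝ):ℂ) else 0)) := by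
    refine Summable.of_norm ?_
    refine Summable.of_nonneg_of_le (fun p => norm_nonneg _) (fun p => ?_)
      (hboundsum.mul_right (2 * Real.pi))
    rw [norm_mul]
    have hb1 : ‖c p.1 * T p.2‖ ≤ bound p := by
      rw [norm_mul, hbounddef]
      exact mul_le_mul_of_nonneg_left (hTbound p.2) (norm_nonneg _)
    have hb2 : ‖(if ((p.2:ℤ) - (p.1:ℤ)) = 0 then ((2 * Real.pi : ℝ):ℂ) else 0)‖ ≤ 2 * Real.pi := by
      split
      · rw [Complex.norm_real, Real.norm_eq_abs, _root_.abs_of_nonneg (by positivity)]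
      · rw [norm_zero]; positivity
    have hbp : 0 ≤ bound p := by rw [hbounddef]; positivity
    calc ‖c p.1 * T p.2‖ * ‖(if ((p.2:ℤ) - (p.1:ℤ)) = 0 then ((2 * Real.pi : ℝ):ℂ) else 0)‖
        ≤ bound p * (2 * Real.pi) := by
          apply mul_le_mul hb1 hb2 (norm_nonneg _) hbp
      _ = bound p * (2 * Real.pi) := rfl
  have hinner : ∀ m : ℕ, Summable (fun k : ℕ => (c m * T k) *
      (if ((k:ℤ) - (m:ℤ)) = 0 then ((2 * Real.pi : ℝ):ℂ) else 0)) := by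
    intro m
    apply summable_of_ne_finset_zero (s := {m})
    intro k hk
    rw [if_neg, mul_zero]
    simp only [Finset.mem_singleton] at hk
    omega
  rw [hGsum.tsum_prod' hinner]
  have hinner_val : ∀ m : ℕ, (∑' k : ℕ, (c m * T k) *
      (if ((k:ℤ) - (m:ℤ)) = 0 then ((2 * Real.pi : ℝ):ℂ) else 0)) =
      (c m * T m) * ((2 * Real.pi : ℝ):ℂ) := by
    intro m
    rw [tsum_eq_single m]
    · rw [if_pos (by omega)]
    · intro k hk
      rw [if_neg (by omega), mul_zero]
  rw [tsum_congr hinner_val]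
  rw [← tsum_mul_left]
  have hπ : ((2 * Real.pi : ℝ):ℂ) ≠ 0 := by
    simp [Real.pi_ne_zero]
  have hterm : ∀ m : ℕ, (1 / (2 * Real.pi) : ℂ) * ((c m * T m) * ((2 * Real.pi : ℝ):ℂ)) =
      c m * T m := by
    intro m
    have : ((2 * Real.pi : ℝ):ℂ) = (2 * Real.pi : ℂ) := by push_cast; ring
    rw [this]
    have h2 : (2 * Real.pi : ℂ) ≠ 0 := by rw [← this]; exact hπ
    field_simp
  rw [tsum_congr hterm]
  have hMbB : HasSum (fun k => c k * T k) ((Mb * B) i j) := by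
    have hMb : HasSum (fun k => c k • A ^ k) Mb := (hMb_sn.of_norm).hasSum
    have h3 := Markov18.entry_hasSum _ _ hMb B i j
    simpa [Matrix.smul_mul, Matrix.smul_apply, smul_eq_mul, hTdef] using h3
  exact hMbB.tsum_eq
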